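/- Let A be an affine hyperplane arrangement in K^d and let cA be its cone in K^{d+1} with additional hyperplane K : y = 0. Then cA is supersolvable with a maximal modular chain passing through K if and only if A admits a maximal saturated chain of modular subarrangements ∅ = A_0 ⊊ A_1 ⊊ A_2 ⊊ ··· ⊊ A_r = A, where r = r(A) and each A_i is a modular subarrangement of A with r(L(A_i)) = i. -/

import Mathlib

open Polynomial
open scoped Classical Pointwise

namespace HypArr

variable {K V : Type*} [Field K] [AddCommGroup V] [Module K V] [FiniteDimensional K V]

/-- `A` is an affine hyperplane arrangement: a finite set of affine hyperplanes,
i.e. nonempty affine subspaces of codimension one. -/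
def IsArrangement (A : Finset (AffineSubspace K V)) : Prop :=
  ∀ H ∈ A, H ≠ ⊥ ∧ Module.finrank K V = Module.finrank K H.direction + 1

/-- The intersection poset `L(A)`: all nonempty intersections of subfamilies of `A`
(the empty intersection being the whole space `⊤`).  The order of `L(A)` is *reverse*
inclusion, so `X ≤ Y` in `L(A)` corresponds to `Y ≤ X` as affine subspaces; the
minimal element `0̂` of `L(A)` is the whole space `⊤`. -/
noncomputable def poset (A : Finset (AffineSubspace K V)) : Finset (AffineSubspace K V) :=
  (A.powerset.image fun S => S.inf id).filter (· ≠ ⊥)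

/-- The rank of an element of `L(A)`: its codimension in `V`. -/
noncomputable def rk (X : AffineSubspace K V) : ℕ :=
  Module.finrank K V - Module.finrank K X.direction

/-- The rank `r(A)` of the arrangement: the maximal rank of an element of `L(A)`. -/
noncomputable def rank (A : Finset (AffineSubspace K V)) : ℕ := (poset A).sup rk

/-- An ideal of `L(A)` (with respect to the reverse-inclusion order of `L(A)`):
a downward closed subset of `L(A)`. -/
def IsIdeal (A I : Finset (AffineSubspace K V)) : Prop :=
  I ⊆ poset A ∧ ∀ X ∈ I, ∀ Y ∈ poset A, X ≤ Y → Y ∈ I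

/-- The principal ideal `⟨X⟩ = {Y ∈ L(A) : Y ≤ X}` of `L(A)` (in the
reverse-inclusion order of `L(A)`, i.e. `{Y ∈ L(A) : X ⊆ Y}`). -/
noncomputable def principal (A : Finset (AffineSubspace K V)) (X : AffineSubspace K V) :
    Finset (AffineSubspace K V) :=
  (poset A).filter fun Y => X ≤ Y

/-- The meet `X ∧ Y` in `L(A)`: the greatest element of `L(A)` below both `X` and `Y`
(in the reverse-inclusion order); in terms of affine subspaces it is the smallest
element of `L(A)` containing both `X` and `Y`.  In particular `X ∧ Y = 0̂` iff
`lmeet A X Y = ⊤`. -/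
noncomputable def lmeet (A : Finset (AffineSubspace K V)) (X Y : AffineSubspace K V) :
    AffineSubspace K V :=
  sInf {W | W ∈ poset A ∧ X ≤ W ∧ Y ≤ W}

/-- An ideal decomposition `{I_1, …, I_m}` of `L(A)`:
(I1) for every `X ∈ L(A) \ {0̂}` some `I j ∩ ⟨X⟩` is a nontrivial principal ideal;
(I2) joins `X_1 ∨ ⋯ ∨ X_m` (i.e. intersections) of members of the ideals exist;
(I3) these joins satisfy the rank condition. -/
def IsIdealDecomposition (A : Finset (AffineSubspace K V)) {m : ℕ}
    (I : Fin m → Finset (AffineSubspace K V)) : Prop :=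
  (∀ i, IsIdeal A (I i)) ∧
  (∀ X ∈ poset A, X ≠ ⊤ →
    ∃ j, ∃ Z ∈ poset A, Z ≠ ⊤ ∧ I j ∩ principal A X = principal A Z) ∧
  (∀ f : Fin m → AffineSubspace K V, (∀ i, f i ∈ I i) →
    Finset.univ.inf f ≠ (⊥ : AffineSubspace K V)) ∧
  (∀ f : Fin m → AffineSubspace K V, (∀ i, f i ∈ I i) →
    rk (Finset.univ.inf f) = ∑ i, rk (f i))

/-- The meet-complement `I^c = {Y ∈ L(A) : Y ∧ X = 0̂ for all X ∈ I}`. -/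
noncomputable def meetCompl (A I : Finset (AffineSubspace K V)) : Finset (AffineSubspace K V) :=
  (poset A).filter fun Y => ∀ X ∈ I, lmeet A X Y = ⊤

/-- An ideal `I` is modular if `{I, I^c}` is an ideal decomposition of `L(A)`. -/
def IsModularIdeal (A I : Finset (AffineSubspace K V)) : Prop :=
  IsIdealDecomposition A ![I, meetCompl A I]

/-- `μ` is the Möbius function `μ(0̂, ·)` of the finite intersection poset `P`
(ordered by reverse inclusion, with minimal element the maximal affine subspace in `P`):
the sum of `μ` over an interval `[0̂, X]` is `1` if `X = 0̂` and `0` otherwise. -/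
def IsMobiusOn (P : Finset (AffineSubspace K V)) (μ : AffineSubspace K V → ℤ) : Prop :=
  ∀ X ∈ P, ∑ Z ∈ P.filter (fun Z => X ≤ Z), μ Z = if ∀ Z ∈ P, Z ≤ X then 1 else 0

/-- The characteristic polynomial `χ(t) = ∑_{X ∈ P} μ(X) t^{dim X}` of an
intersection poset `P` with Möbius function `μ`. -/
noncomputable def charPolyOn (P : Finset (AffineSubspace K V)) (μ : AffineSubspace K V → ℤ) :
    Polynomial ℤ :=
  ∑ X ∈ P, C (μ X) * Polynomial.X ^ (Module.finrank K X.direction)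

/-- The characteristic polynomial `χ̃(I, t) = ∑_{X ∈ I} μ(X) t^{r(I) - r(X)}` of an ideal. -/
noncomputable def tildeChi (μ : AffineSubspace K V → ℤ) (I : Finset (AffineSubspace K V)) :
    Polynomial ℤ :=
  ∑ X ∈ I, C (μ X) * Polynomial.X ^ (I.sup rk - rk X)

/-- A central arrangement: the intersection of all hyperplanes is nonempty. -/
def IsCentral (A : Finset (AffineSubspace K V)) : Prop := A.inf id ≠ ⊥

/-- A modular element `Z ∈ L(A)`: `r(Z) + r(X) = r(Z ∧ X) + r(Z ∨ X)` for all `X ∈ L(A)`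
(the join `Z ∨ X` being the intersection `Z ⊓ X` of affine subspaces). -/
def IsModularElement (A : Finset (AffineSubspace K V)) (Z : AffineSubspace K V) : Prop :=
  Z ∈ poset A ∧ ∀ X ∈ poset A, rk Z + rk X = rk (lmeet A Z X) + rk (Z ⊓ X)

/-- The intersection poset of the restriction `B^W = {H ∩ W : H ∈ B, H ∩ W ≠ ∅}`
of the arrangement `B` to the affine subspace `W`, realized as a finset of affine
subspaces of the ambient space (with minimal element `W`). -/
noncomputable def tracePoset (B : Finset (AffineSubspace K V)) (W : AffineSubspace K V) :
    Finset (AffineSubspace K V) :=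
  (((B.filter fun H => H ⊓ W ≠ ⊥).image fun H => H ⊓ W).powerset.image
      fun S => W ⊓ S.inf id).filter (· ≠ ⊥)

/-- A modular subarrangement `B ⊆ A`: `L(B)`, viewed as a subposet of `L(A)`,
is a modular ideal of `L(A)`. -/
def IsModularSub (A B : Finset (AffineSubspace K V)) : Prop :=
  B ⊆ A ∧ IsModularIdeal A (poset B)

end HypArr

namespace HypArr

variable {K V : Type*} [Field K] [AddCommGroup V] [Module K V] [FiniteDimensional K V]

/-- The cone `cH` over an affine hyperplane `H ⊆ V`: the linear hyperplane of `V × K`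
spanned by `H × {1}` (for `H : α·x = a` this is the hyperplane `α·x = a·y`). -/
noncomputable def cone (H : AffineSubspace K V) : AffineSubspace K (V × K) :=
  (Submodule.span K ((fun x => (x, (1 : K))) '' (H : Set V))).toAffineSubspace

/-- The additional hyperplane `K : y = 0` of the cone construction. -/
noncomputable def addHyp (K V : Type*) [Field K] [AddCommGroup V] [Module K V] :
    AffineSubspace K (V × K) :=
  (LinearMap.ker (LinearMap.snd K V K)).toAffineSubspace

/-- The cone `cA` over the affine arrangement `A`: the linear arrangement in `V × K`
consisting of the cones `cH` for `H ∈ A` together with the additional hyperplane. -/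
noncomputable def coneArr (A : Finset (AffineSubspace K V)) :
    Finset (AffineSubspace K (V × K)) :=
  insert (addHyp K V) (A.image cone)

end HypArr


namespace HypArr

section Infra

set_option linter.unusedSectionVars false

variable {K V : Type*} [Field K] [AddCommGroup V] [Module K V] [FiniteDimensional K V]

open Module Submodule

/-- codimension of a submodule -/
noncomputable def crk (U : Submodule K V) : ℕ := finrank K V - finrank K U

/-- intersection of the directions -/
noncomputable def dInt (S : Finset (AffineSubspace K V)) : Submodule K V :=
  S.inf fun H => H.direction

lemma rk_eq_crk (X : AffineSubspace K V) : rk X = crk X.direction := rfl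

lemma crk_add_finrank (U : Submodule K V) : crk U + finrank K U = finrank K V := by
  have := U.finrank_le
  unfold crk; omega

lemma crk_top : crk (⊤ : Submodule K V) = 0 := by
  unfold crk; rw [finrank_top]; omega

lemma crk_eq_zero_iff {U : Submodule K V} : crk U = 0 ↔ U = ⊤ := by
  constructor
  · intro h
    have h2 := crk_add_finrank U
    exact Submodule.eq_top_of_finrank_eq (by omega)
  · rintro rfl; exact crk_top

lemma crk_anti {U W : Submodule K V} (h : U ≤ W) : crk W ≤ crk U := by
  have := Submodule.finrank_mono h
  unfold crk; omega

lemma crk_inf_add_crk_sup (U W : Submodule K V) :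
    crk (U ⊓ W) + crk (U ⊔ W) = crk U + crk W := by
  have h := Submodule.finrank_sup_add_finrank_inf_eq U W
  have h1 := crk_add_finrank U
  have h2 := crk_add_finrank W
  have h3 := crk_add_finrank (U ⊓ W)
  have h4 := crk_add_finrank (U ⊔ W)
  omega

lemma crk_inf_le_add (U W : Submodule K V) : crk (U ⊓ W) ≤ crk U + crk W := by
  have := crk_inf_add_crk_sup U W
  omega

lemma crk_inf_eq_add_iff {U W : Submodule K V} :
    crk (U ⊓ W) = crk U + crk W ↔ U ⊔ W = ⊤ := by
  have h := crk_inf_add_crk_sup U W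
  rw [← crk_eq_zero_iff (U := U ⊔ W)]
  omega

lemma rk_top' : rk (⊤ : AffineSubspace K V) = 0 := by
  rw [rk_eq_crk, AffineSubspace.direction_top, crk_top]

lemma affine_top_ne_bot : (⊤ : AffineSubspace K V) ≠ ⊥ := by
  rw [← AffineSubspace.nonempty_iff_ne_bot]
  exact ⟨0, trivial⟩

lemma mem_poset_iff {A : Finset (AffineSubspace K V)} {X : AffineSubspace K V} :
    X ∈ poset A ↔ (∃ S ⊆ A, S.inf id = X) ∧ X ≠ ⊥ := by
  simp [poset, Finset.mem_filter, Finset.mem_image, Finset.mem_powerset]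

lemma top_mem_poset (A : Finset (AffineSubspace K V)) : ⊤ ∈ poset A := by
  rw [mem_poset_iff]
  exact ⟨⟨∅, by simp, by simp⟩, affine_top_ne_bot⟩

lemma poset_mono {A B : Finset (AffineSubspace K V)} (h : B ⊆ A) : poset B ⊆ poset A := by
  intro X hX
  rw [mem_poset_iff] at hX ⊢
  obtain ⟨⟨S, hS, rfl⟩, hne⟩ := hX
  exact ⟨⟨S, hS.trans h, rfl⟩, hne⟩

lemma mem_poset_of_mem {A : Finset (AffineSubspace K V)} {H : AffineSubspace K V}
    (hH : H ∈ A) (hne : H ≠ ⊥) : H ∈ poset A := by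
  rw [mem_poset_iff]
  exact ⟨⟨{H}, by simpa using hH, by simp⟩, hne⟩

lemma inf_mem_poset {A : Finset (AffineSubspace K V)} {X Y : AffineSubspace K V}
    (hX : X ∈ poset A) (hY : Y ∈ poset A) (hne : X ⊓ Y ≠ ⊥) : X ⊓ Y ∈ poset A := by
  rw [mem_poset_iff] at hX hY ⊢
  obtain ⟨⟨S, hS, rfl⟩, -⟩ := hX
  obtain ⟨⟨T, hT, rfl⟩, -⟩ := hY
  exact ⟨⟨S ∪ T, Finset.union_subset hS hT, by rw [Finset.inf_union]⟩, hne⟩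

lemma mem_finset_inf {S : Finset (AffineSubspace K V)} {p : V} :
    p ∈ S.inf id ↔ ∀ H ∈ S, p ∈ H := by
  induction S using Finset.induction_on with
  | empty => simp
  | insert _ _ h ih =>
      rw [Finset.inf_insert]
      simp only [Finset.mem_insert, id]
      constructor
      · rintro ⟨h1, h2⟩ H (rfl | hH)
        · exact h1
        · exact ih.1 h2 H hH
      · intro hall
        exact ⟨hall _ (Or.inl rfl), ih.2 fun H hH => hall H (Or.inr hH)⟩

lemma nonempty_of_mem_poset {A : Finset (AffineSubspace K V)} {X : AffineSubspace K V}
    (hX : X ∈ poset A) : ∃ p, p ∈ X := by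
  have := (mem_poset_iff.1 hX).2
  rw [← AffineSubspace.nonempty_iff_ne_bot] at this
  exact this

lemma direction_finset_inf {S : Finset (AffineSubspace K V)} {p : V} (hp : p ∈ S.inf id) :
    (S.inf id).direction = dInt S := by
  induction S using Finset.induction_on with
  | empty => simp [dInt]
  | @insert H S hHS ih =>
      rw [Finset.inf_insert] at hp ⊢
      rw [dInt, Finset.inf_insert, ← dInt]
      have hp1 : p ∈ (H : AffineSubspace K V) := by
        have : p ∈ (id H ⊓ S.inf id : AffineSubspace K V) := hp
        exact (AffineSubspace.mem_inf_iff _ _ _ |>.1 this).1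
      have hp2 : p ∈ S.inf id := by
        have : p ∈ (id H ⊓ S.inf id : AffineSubspace K V) := hp
        exact (AffineSubspace.mem_inf_iff _ _ _ |>.1 this).2
      rw [show (id H : AffineSubspace K V) = H from rfl] at *
      rw [AffineSubspace.direction_inf_of_mem hp1 hp2, ih hp2]


lemma flat_eq_inf_filter {A : Finset (AffineSubspace K V)} {X : AffineSubspace K V}
    (hX : X ∈ poset A) : (A.filter fun H => X ≤ H).inf id = X := by
  obtain ⟨⟨S, hS, rfl⟩, hne⟩ := mem_poset_iff.1 hX
  refine le_antisymm ?_ ?_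
  · exact Finset.inf_mono fun H hH => Finset.mem_filter.2 ⟨hS hH, Finset.inf_le hH⟩
  · exact Finset.le_inf fun H hH => (Finset.mem_filter.1 hH).2

lemma exists_hyp_of_ne_top {A : Finset (AffineSubspace K V)} {X : AffineSubspace K V}
    (hX : X ∈ poset A) (hne : X ≠ ⊤) : ∃ H ∈ A, X ≤ H := by
  by_contra h
  push_neg at h
  have hemp : A.filter (fun H => X ≤ H) = ∅ :=
    Finset.filter_eq_empty_iff.2 fun {H} hH => h H hH
  have := flat_eq_inf_filter hX
  rw [hemp] at this
  simp at this
  exact hne this.symm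

lemma finset_inf_mem_poset {A T : Finset (AffineSubspace K V)} (hT : T ⊆ poset A)
    (hne : T.inf id ≠ ⊥) : T.inf id ∈ poset A := by
  induction T using Finset.induction_on with
  | empty => simpa using top_mem_poset A
  | @insert X T hXT ih =>
      rw [Finset.inf_insert] at hne ⊢
      have hX : X ∈ poset A := hT (Finset.mem_insert_self _ _)
      have hT' : T ⊆ poset A := fun Y hY => hT (Finset.mem_insert_of_mem hY)
      have hTne : T.inf id ≠ ⊥ := by
        intro h
        rw [h] at hne
        simp at hne
      exact inf_mem_poset hX (ih hT' hTne) hne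

lemma inf_ne_bot_of_direction_sup_eq_top {X Y : AffineSubspace K V}
    (hX : X ≠ ⊥) (hY : Y ≠ ⊥)
    (h : X.direction ⊔ Y.direction = ⊤) : X ⊓ Y ≠ ⊥ := by
  obtain ⟨x, hx⟩ := (AffineSubspace.nonempty_iff_ne_bot X).2 hX
  obtain ⟨y, hy⟩ := (AffineSubspace.nonempty_iff_ne_bot Y).2 hY
  have hmem : (y - x : V) ∈ X.direction ⊔ Y.direction := by rw [h]; trivial
  obtain ⟨u, hu, w, hw, huw⟩ := Submodule.mem_sup.1 hmem
  rw [← AffineSubspace.nonempty_iff_ne_bot]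
  refine ⟨u +ᵥ x, ?_⟩
  have h1 : u +ᵥ x ∈ X := (AffineSubspace.vadd_mem_iff_mem_direction u hx).2 hu
  have h2 : u +ᵥ x ∈ Y := by
    have heq : u +ᵥ x = (-w) +ᵥ y := by
      have h' : u + w + x = y := by rw [huw]; abel
      rw [vadd_eq_add, vadd_eq_add]
      calc u + x = -w + (u + w + x) := by abel
        _ = -w + y := by rw [h']
    rw [heq]
    exact (AffineSubspace.vadd_mem_iff_mem_direction (-w) hy).2 (neg_mem hw)
  exact (AffineSubspace.mem_inf_iff _ _ _).2 ⟨h1, h2⟩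

lemma crk_lt_of_lt {U W : Submodule K V} (h : U < W) : crk W < crk U := by
  have := Submodule.finrank_lt_finrank_of_lt h
  have b1 := crk_add_finrank U
  have b2 := crk_add_finrank W
  omega

lemma direction_le_of_disjoint {X H : AffineSubspace K V}
    (hX : X ≠ ⊥) (hH : H ≠ ⊥) (hcod : crk H.direction = 1)
    (hdisj : X ⊓ H = ⊥) : X.direction ≤ H.direction := by
  by_contra hle
  have hlt : H.direction < X.direction ⊔ H.direction := by
    rcases lt_or_eq_of_le (le_sup_right : H.direction ≤ X.direction ⊔ H.direction) with h | h
    · exact h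
    · exact absurd (le_sup_left.trans h.ge) hle
  have hcrk := crk_lt_of_lt hlt
  rw [hcod] at hcrk
  have hsup : X.direction ⊔ H.direction = ⊤ := crk_eq_zero_iff.1 (by omega)
  exact (inf_ne_bot_of_direction_sup_eq_top hX hH hsup) hdisj

lemma dInt_le_direction_of_mem_poset {B : Finset (AffineSubspace K V)}
    {Y : AffineSubspace K V} (hY : Y ∈ poset B) : dInt B ≤ Y.direction := by
  obtain ⟨⟨S, hS, rfl⟩, hne⟩ := mem_poset_iff.1 hY
  obtain ⟨p, hp⟩ := (AffineSubspace.nonempty_iff_ne_bot _).2 hne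
  rw [direction_finset_inf hp]
  exact Finset.inf_mono hS

lemma exists_dInt_flat {B : Finset (AffineSubspace K V)} (hB : IsArrangement B) :
    ∃ X ∈ poset B, X.direction = dInt B := by
  obtain ⟨X, hX, hsup⟩ := Finset.exists_mem_eq_sup (poset B) ⟨⊤, top_mem_poset B⟩ rk
  refine ⟨X, hX, le_antisymm ?_ (dInt_le_direction_of_mem_poset hX)⟩
  refine Finset.le_inf fun H hH => ?_
  have hHb : H ≠ ⊥ := (hB H hH).1
  have hXb : X ≠ ⊥ := (mem_poset_iff.1 hX).2
  have hcod : crk H.direction = 1 := by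
    have := (hB H hH).2
    unfold crk
    omega
  by_cases hd : X ⊓ H = ⊥
  · exact direction_le_of_disjoint hXb hHb hcod hd
  · have hXH : X ⊓ H ∈ poset B := inf_mem_poset hX (mem_poset_of_mem hH hHb) hd
    have hrk : rk (X ⊓ H) ≤ rk X := hsup ▸ Finset.le_sup hXH
    obtain ⟨p, hp⟩ := (AffineSubspace.nonempty_iff_ne_bot _).2 hd
    have hp' := (AffineSubspace.mem_inf_iff _ _ _).1 hp
    have hdir : (X ⊓ H).direction = X.direction ⊓ H.direction :=
      AffineSubspace.direction_inf_of_mem hp'.1 hp'.2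
    rw [rk_eq_crk, rk_eq_crk, hdir] at hrk
    have hfin : finrank K X.direction ≤ finrank K ↥(X.direction ⊓ H.direction) := by
      have b1 := crk_add_finrank (X.direction ⊓ H.direction)
      have b2 := crk_add_finrank X.direction
      omega
    have heq : X.direction ⊓ H.direction = X.direction :=
      Submodule.eq_of_le_of_finrank_le inf_le_left hfin
    rw [← heq]
    exact inf_le_right

lemma sup_rk_poset {B : Finset (AffineSubspace K V)} (hB : IsArrangement B) :
    (poset B).sup rk = crk (dInt B) := by
  obtain ⟨X, hX, hdir⟩ := exists_dInt_flat hB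
  apply le_antisymm
  · exact Finset.sup_le fun Y hY => by
      rw [rk_eq_crk]
      exact crk_anti (dInt_le_direction_of_mem_poset hY)
  · calc crk (dInt B) = rk X := by rw [rk_eq_crk, hdir]
      _ ≤ _ := Finset.le_sup hX

end Infra

end HypArr


namespace HypArr

section ConeLift

set_option linter.unusedSectionVars false

variable {K V : Type*} [Field K] [AddCommGroup V] [Module K V] [FiniteDimensional K V]

open Module Submodule

/-- lift of a submodule into `V × K` as the linear subspace `U × {0}` -/
noncomputable def liftS (U : Submodule K V) : Submodule K (V × K) :=
  U.map (LinearMap.inl K V K)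

noncomputable def liftA (U : Submodule K V) : AffineSubspace K (V × K) :=
  (liftS U).toAffineSubspace

noncomputable def coneS (X : AffineSubspace K V) : Submodule K (V × K) :=
  Submodule.span K ((fun x => (x, (1 : K))) '' (X : Set V))

lemma cone_eq_coneS (X : AffineSubspace K V) : cone X = (coneS X).toAffineSubspace := rfl

lemma mem_liftS {U : Submodule K V} {v : V} {t : K} :
    (v, t) ∈ liftS U ↔ v ∈ U ∧ t = 0 := by
  constructor
  · rintro ⟨u, hu, huv⟩
    have h1 : u = v := congrArg Prod.fst huv
    have h2 : (0 : K) = t := congrArg Prod.snd huv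
    exact ⟨h1 ▸ hu, h2.symm⟩
  · rintro ⟨hv, rfl⟩
    exact ⟨v, hv, rfl⟩

lemma mem_liftA {U : Submodule K V} {v : V} {t : K} :
    (v, t) ∈ liftA U ↔ v ∈ U ∧ t = 0 := by
  rw [liftA, Submodule.mem_toAffineSubspace, mem_liftS]

lemma direction_liftA (U : Submodule K V) : (liftA U).direction = liftS U :=
  Submodule.toAffineSubspace_direction _

lemma liftA_ne_bot (U : Submodule K V) : liftA U ≠ ⊥ := by
  rw [← AffineSubspace.nonempty_iff_ne_bot]
  exact ⟨(0, 0), mem_liftA.2 ⟨zero_mem U, rfl⟩⟩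

lemma finrank_liftS (U : Submodule K V) : finrank K (liftS U) = finrank K U :=
  (LinearEquiv.finrank_eq (Submodule.equivMapOfInjective _ LinearMap.inl_injective U)).symm

lemma addHyp_eq_liftA_top : addHyp K V = liftA (⊤ : Submodule K V) := by
  apply SetLike.ext
  rintro ⟨v, t⟩
  rw [mem_liftA, addHyp, Submodule.mem_toAffineSubspace, LinearMap.mem_ker]
  simp

lemma coneS_eq {X : AffineSubspace K V} {p : V} (hp : p ∈ X) :
    coneS X = (K ∙ ((p, (1 : K)) : V × K)) ⊔ liftS X.direction := by
  apply le_antisymm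
  · rw [coneS, Submodule.span_le]
    rintro q ⟨x, hx, rfl⟩
    have h1 : ((p, (1 : K)) : V × K) ∈ (K ∙ ((p, (1 : K)) : V × K)) ⊔ liftS X.direction :=
      Submodule.mem_sup_left (Submodule.mem_span_singleton_self _)
    have h2 : ((x - p, (0 : K)) : V × K) ∈ (K ∙ ((p, (1 : K)) : V × K)) ⊔ liftS X.direction := by
      refine Submodule.mem_sup_right (mem_liftS.2 ⟨?_, rfl⟩)
      simpa using AffineSubspace.vsub_mem_direction hx hp
    have h3 := add_mem h1 h2
    simpa using h3
  · refine sup_le ?_ ?_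
    · rw [Submodule.span_singleton_le_iff_mem]
      exact Submodule.subset_span ⟨p, hp, rfl⟩
    · rintro ⟨v, t⟩ hq
      obtain ⟨hv, rfl⟩ := mem_liftS.1 hq
      have hvp : v + p ∈ X := by
        have := (AffineSubspace.vadd_mem_iff_mem_direction v hp).2 hv
        simpa [vadd_eq_add] using this
      have h1 : ((v + p, (1 : K)) : V × K) ∈ coneS X := Submodule.subset_span ⟨v + p, hvp, rfl⟩
      have h2 : ((p, (1 : K)) : V × K) ∈ coneS X := Submodule.subset_span ⟨p, hp, rfl⟩
      have h3 := sub_mem h1 h2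
      simpa using h3

lemma mem_coneS {X : AffineSubspace K V} {p : V} (hp : p ∈ X) {v : V} {t : K} :
    (v, t) ∈ coneS X ↔ v - t • p ∈ X.direction := by
  rw [coneS_eq hp]
  constructor
  · intro h
    obtain ⟨a, ha, b, hb, hab⟩ := Submodule.mem_sup.1 h
    obtain ⟨c, rfl⟩ := Submodule.mem_span_singleton.1 ha
    obtain ⟨⟨w, s⟩, rfl⟩ : ∃ q : V × K, q = b := ⟨b, rfl⟩
    obtain ⟨hw, hs⟩ := mem_liftS.1 hb
    subst hs
    have h1 : c • p + w = v := by
      have := congrArg Prod.fst hab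
      simpa using this
    have h2 : c = t := by
      have := congrArg Prod.snd hab
      simpa using this
    have h3 : v - t • p = w := by rw [← h2, ← h1]; abel
    rw [h3]
    exact hw
  · intro h
    have h1 : ((t • p, t) : V × K) ∈ (K ∙ ((p, (1 : K)) : V × K)) ⊔ liftS X.direction := by
      refine Submodule.mem_sup_left (Submodule.mem_span_singleton.2 ⟨t, ?_⟩)
      simp [Prod.smul_mk]
    have h2 : ((v - t • p, (0 : K)) : V × K) ∈ (K ∙ ((p, (1 : K)) : V × K)) ⊔ liftS X.direction :=
      Submodule.mem_sup_right (mem_liftS.2 ⟨h, rfl⟩)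
    have h3 := add_mem h1 h2
    simpa using h3

lemma mem_cone {X : AffineSubspace K V} (hX : X ≠ ⊥) {v : V} {t : K} :
    (v, t) ∈ cone X ↔ (t = 0 ∧ v ∈ X.direction) ∨ (t ≠ 0 ∧ t⁻¹ • v ∈ X) := by
  obtain ⟨p, hp⟩ := (AffineSubspace.nonempty_iff_ne_bot X).2 hX
  rw [cone_eq_coneS, Submodule.mem_toAffineSubspace, mem_coneS hp]
  by_cases ht : t = 0
  · subst ht
    simp
  · simp only [ht, false_and, false_or, ne_eq, not_false_iff, true_and]
    have : v - t • p = t • (t⁻¹ • v - p) := by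
      rw [smul_sub, smul_inv_smul₀ ht]
    rw [this, Submodule.smul_mem_iff _ ht]
    exact (AffineSubspace.vsub_right_mem_direction_iff_mem hp _).trans Iff.rfl

lemma mem_cone_one {X : AffineSubspace K V} (hX : X ≠ ⊥) {x : V} :
    (x, (1 : K)) ∈ cone X ↔ x ∈ X := by
  rw [mem_cone hX]
  simp

lemma cone_ne_bot {X : AffineSubspace K V} (hX : X ≠ ⊥) : cone X ≠ ⊥ := by
  rw [← AffineSubspace.nonempty_iff_ne_bot]
  obtain ⟨p, hp⟩ := (AffineSubspace.nonempty_iff_ne_bot X).2 hX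
  exact ⟨(p, 1), (mem_cone_one hX).2 hp⟩

lemma cone_le_cone {X Y : AffineSubspace K V} (hX : X ≠ ⊥) (hY : Y ≠ ⊥) :
    cone X ≤ cone Y ↔ X ≤ Y := by
  constructor
  · intro h x hx
    exact (mem_cone_one hY).1 (h ((mem_cone_one hX).2 hx))
  · intro h
    rintro ⟨v, t⟩ hv
    rw [mem_cone hX] at hv
    rw [mem_cone hY]
    rcases hv with ⟨ht, hd⟩ | ⟨ht, hm⟩
    · exact Or.inl ⟨ht, AffineSubspace.direction_le h hd⟩
    · exact Or.inr ⟨ht, h hm⟩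

lemma liftA_le_liftA {U W : Submodule K V} : liftA U ≤ liftA W ↔ U ≤ W := by
  constructor
  · intro h u hu
    exact (mem_liftA.1 (h (mem_liftA.2 ⟨hu, rfl⟩))).1
  · intro h
    rintro ⟨v, t⟩ hv
    have hv' : (v, t) ∈ liftA U := hv
    obtain ⟨hv1, rfl⟩ := mem_liftA.1 hv'
    show (v, (0 : K)) ∈ liftA W
    exact mem_liftA.2 ⟨h hv1, rfl⟩

lemma liftA_le_cone {U : Submodule K V} {X : AffineSubspace K V} (hX : X ≠ ⊥) :
    liftA U ≤ cone X ↔ U ≤ X.direction := by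
  constructor
  · intro h u hu
    have h2 : (u, (0 : K)) ∈ cone X := h (mem_liftA.2 ⟨hu, rfl⟩)
    rw [mem_cone hX] at h2
    rcases h2 with ⟨-, hd⟩ | ⟨ht, -⟩
    · exact hd
    · exact absurd rfl ht
  · intro h
    rintro ⟨v, t⟩ hv
    have hv' : (v, t) ∈ liftA U := hv
    obtain ⟨hv1, rfl⟩ := mem_liftA.1 hv'
    show (v, (0 : K)) ∈ cone X
    rw [mem_cone hX]
    exact Or.inl ⟨rfl, h hv1⟩

lemma cone_not_le_liftA {X : AffineSubspace K V} (hX : X ≠ ⊥) {U : Submodule K V} :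
    ¬ cone X ≤ liftA U := by
  intro h
  obtain ⟨p, hp⟩ := (AffineSubspace.nonempty_iff_ne_bot X).2 hX
  have := mem_liftA.1 (h ((mem_cone_one hX).2 hp))
  exact one_ne_zero this.2

lemma liftA_inf_liftA (U W : Submodule K V) : liftA U ⊓ liftA W = liftA (U ⊓ W) := by
  apply SetLike.ext
  rintro ⟨v, t⟩
  rw [AffineSubspace.mem_inf_iff, mem_liftA, mem_liftA, mem_liftA, Submodule.mem_inf]
  tauto

lemma liftA_inf_cone {U : Submodule K V} {X : AffineSubspace K V} (hX : X ≠ ⊥) :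
    liftA U ⊓ cone X = liftA (U ⊓ X.direction) := by
  apply SetLike.ext
  rintro ⟨v, t⟩
  rw [AffineSubspace.mem_inf_iff, mem_liftA, mem_liftA, mem_cone hX, Submodule.mem_inf]
  constructor
  · rintro ⟨⟨hv, rfl⟩, h⟩
    rcases h with ⟨-, hd⟩ | ⟨ht, -⟩
    · exact ⟨⟨hv, hd⟩, rfl⟩
    · exact absurd rfl ht
  · rintro ⟨⟨hv, hd⟩, rfl⟩
    exact ⟨⟨hv, rfl⟩, Or.inl ⟨rfl, hd⟩⟩

lemma finrank_prod' : finrank K (V × K) = finrank K V + 1 := by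
  rw [Module.finrank_prod, Module.finrank_self]

lemma finrank_coneS {X : AffineSubspace K V} (hX : X ≠ ⊥) :
    finrank K (coneS X) = finrank K X.direction + 1 := by
  obtain ⟨p, hp⟩ := (AffineSubspace.nonempty_iff_ne_bot X).2 hX
  rw [coneS_eq hp]
  have hdisj : (K ∙ ((p, (1 : K)) : V × K)) ⊓ liftS X.direction = ⊥ := by
    rw [eq_bot_iff]
    rintro ⟨v, t⟩ ⟨h1, h2⟩
    obtain ⟨c, hc⟩ := Submodule.mem_span_singleton.1 h1
    have hct : c = t := by simpa using congrArg Prod.snd hc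
    obtain ⟨-, ht⟩ := mem_liftS.1 h2
    subst ht
    subst hct
    have : v = 0 := by simpa using congrArg Prod.fst hc.symm
    simp [this]
  have hsum := Submodule.finrank_sup_add_finrank_inf_eq
    (K ∙ ((p, (1 : K)) : V × K)) (liftS X.direction)
  rw [hdisj] at hsum
  have h1 : finrank K (K ∙ ((p, (1 : K)) : V × K)) = 1 :=
    finrank_span_singleton (by simp)
  have h2 := finrank_liftS X.direction
  simp only [finrank_bot] at hsum
  omega

lemma direction_cone (X : AffineSubspace K V) : (cone X).direction = coneS X :=
  Submodule.toAffineSubspace_direction _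

lemma rk_cone {X : AffineSubspace K V} (hX : X ≠ ⊥) : rk (cone X) = rk X := by
  rw [rk, rk, direction_cone, finrank_coneS hX, finrank_prod']
  omega

lemma rk_liftA (U : Submodule K V) : rk (liftA U) = crk U + 1 := by
  rw [rk, direction_liftA, finrank_liftS, finrank_prod']
  have := U.finrank_le
  unfold crk
  omega

lemma cone_top : cone (⊤ : AffineSubspace K V) = ⊤ := by
  apply SetLike.ext
  rintro ⟨v, t⟩
  simp only [AffineSubspace.mem_top, iff_true]
  rw [mem_cone affine_top_ne_bot]
  by_cases ht : t = 0
  · exact Or.inl ⟨ht, by simp⟩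
  · exact Or.inr ⟨ht, trivial⟩

lemma ne_top_of_rk_pos {W' : Type*} [AddCommGroup W'] [Module K W'] [FiniteDimensional K W']
    {X : AffineSubspace K W'} (h : 0 < rk X) : X ≠ ⊤ := by
  intro hEq
  subst hEq
  rw [rk_top'] at h
  omega

end ConeLift

end HypArr


namespace HypArr

section Structure

set_option linter.unusedSectionVars false

variable {K V : Type*} [Field K] [AddCommGroup V] [Module K V] [FiniteDimensional K V]

open Module Submodule

lemma mem_addHyp {v : V} {t : K} : (v, t) ∈ addHyp K V ↔ t = 0 := by
  rw [addHyp, Submodule.mem_toAffineSubspace, LinearMap.mem_ker]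
  simp

lemma mem_finset_inf' {ι : Type*} {s : Finset ι} {f : ι → AffineSubspace K V} {p : V} :
    p ∈ s.inf f ↔ ∀ i ∈ s, p ∈ f i := by
  induction s using Finset.induction_on with
  | empty => simp
  | @insert a s ha ih =>
      rw [Finset.inf_insert]
      simp only [Finset.mem_insert, AffineSubspace.mem_inf_iff]
      constructor
      · rintro ⟨h1, h2⟩ i (rfl | hi)
        · exact h1
        · exact ih.1 h2 i hi
      · intro hall
        exact ⟨hall _ (Or.inl rfl), ih.2 fun i hi => hall i (Or.inr hi)⟩

lemma mem_cone_all {S : Finset (AffineSubspace K V)} (hS : ∀ H ∈ S, H ≠ ⊥) {v : V} {t : K} :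
    (∀ H ∈ S, (v, t) ∈ cone H) ↔
      ((t = 0 ∧ v ∈ dInt S) ∨ (t ≠ 0 ∧ t⁻¹ • v ∈ S.inf id)) := by
  by_cases ht : t = 0
  · subst ht
    constructor
    · intro h
      refine Or.inl ⟨rfl, ?_⟩
      rw [dInt, Submodule.mem_finsetInf]
      intro H hH
      have := (mem_cone (hS H hH)).1 (h H hH)
      rcases this with ⟨-, hd⟩ | ⟨hne, -⟩
      · exact hd
      · exact absurd rfl hne
    · rintro (⟨-, hd⟩ | ⟨hne, -⟩) H hH
      · rw [dInt, Submodule.mem_finsetInf] at hd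
        exact (mem_cone (hS H hH)).2 (Or.inl ⟨rfl, hd H hH⟩)
      · exact absurd rfl hne
  · simp only [ht, false_and, false_or, ne_eq, not_false_iff, true_and]
    rw [mem_finset_inf]
    constructor
    · intro h H hH
      have := (mem_cone (hS H hH)).1 (h H hH)
      rcases this with ⟨h0, -⟩ | ⟨-, hm⟩
      · exact absurd h0 ht
      · exact hm
    · intro h H hH
      exact (mem_cone (hS H hH)).2 (Or.inr ⟨ht, h H hH⟩)

lemma isArrangement_coneArr {A : Finset (AffineSubspace K V)} (hA : IsArrangement A) :
    IsArrangement (coneArr A) := by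
  intro H' hH'
  rcases Finset.mem_insert.1 hH' with rfl | hc
  · constructor
    · rw [addHyp_eq_liftA_top]
      exact liftA_ne_bot _
    · have h1 : rk (addHyp K V) = 1 := by
        rw [addHyp_eq_liftA_top, rk_liftA, crk_top]
      have h2 := crk_add_finrank (addHyp K V).direction
      rw [rk_eq_crk] at h1
      omega
  · obtain ⟨H, hH, rfl⟩ := Finset.mem_image.1 hc
    have hHb := (hA H hH).1
    constructor
    · exact cone_ne_bot hHb
    · have h1 : rk (cone H) = 1 := by
        rw [rk_cone hHb, rk_eq_crk]
        have := (hA H hH).2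
        unfold crk
        omega
      have h2 := crk_add_finrank (cone H).direction
      rw [rk_eq_crk] at h1
      omega

lemma inf_image_cone_eq_cone {S : Finset (AffineSubspace K V)} (hS : ∀ H ∈ S, H ≠ ⊥)
    (hbot : S.inf id ≠ ⊥) : (S.image cone).inf id = cone (S.inf id) := by
  apply SetLike.ext
  rintro ⟨v, t⟩
  rw [mem_finset_inf, mem_cone hbot]
  obtain ⟨p, hp⟩ := (AffineSubspace.nonempty_iff_ne_bot _).2 hbot
  rw [direction_finset_inf hp]
  have : (∀ H' ∈ S.image cone, (v, t) ∈ H') ↔ ∀ H ∈ S, (v, t) ∈ cone H := by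
    constructor
    · intro h H hH
      exact h _ (Finset.mem_image_of_mem cone hH)
    · intro h H' hH'
      obtain ⟨H, hH, rfl⟩ := Finset.mem_image.1 hH'
      exact h H hH
  rw [this, mem_cone_all hS]

lemma inf_image_cone_eq_liftA {S : Finset (AffineSubspace K V)} (hS : ∀ H ∈ S, H ≠ ⊥)
    (hbot : S.inf id = ⊥) : (S.image cone).inf id = liftA (dInt S) := by
  apply SetLike.ext
  rintro ⟨v, t⟩
  rw [mem_finset_inf, mem_liftA]
  have : (∀ H' ∈ S.image cone, (v, t) ∈ H') ↔ ∀ H ∈ S, (v, t) ∈ cone H := by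
    constructor
    · intro h H hH
      exact h _ (Finset.mem_image_of_mem cone hH)
    · intro h H' hH'
      obtain ⟨H, hH, rfl⟩ := Finset.mem_image.1 hH'
      exact h H hH
  rw [this, mem_cone_all hS]
  constructor
  · rintro (⟨h1, h2⟩ | ⟨h1, h2⟩)
    · exact ⟨h2, h1⟩
    · rw [hbot] at h2
      exact absurd h2 (AffineSubspace.notMem_bot K V _)
  · rintro ⟨h1, h2⟩
    exact Or.inl ⟨h2, h1⟩

lemma insert_addHyp_inf_eq_liftA {S : Finset (AffineSubspace K V)} (hS : ∀ H ∈ S, H ≠ ⊥) :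
    (insert (addHyp K V) (S.image cone)).inf id = liftA (dInt S) := by
  rw [Finset.inf_insert]
  apply SetLike.ext
  rintro ⟨v, t⟩
  rw [AffineSubspace.mem_inf_iff, mem_finset_inf, mem_liftA]
  have : (∀ H' ∈ S.image cone, (v, t) ∈ H') ↔ ∀ H ∈ S, (v, t) ∈ cone H := by
    constructor
    · intro h H hH
      exact h _ (Finset.mem_image_of_mem cone hH)
    · intro h H' hH'
      obtain ⟨H, hH, rfl⟩ := Finset.mem_image.1 hH'
      exact h H hH
  rw [show (id (addHyp K V) : AffineSubspace K (V × K)) = addHyp K V from rfl, mem_addHyp,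
    this, mem_cone_all hS]
  constructor
  · rintro ⟨rfl, (⟨-, h2⟩ | ⟨h1, -⟩)⟩
    · exact ⟨h2, rfl⟩
    · exact absurd rfl h1
  · rintro ⟨h1, rfl⟩
    exact ⟨rfl, Or.inl ⟨rfl, h1⟩⟩

lemma mem_poset_coneArr_iff {A : Finset (AffineSubspace K V)} (hA : IsArrangement A)
    {X' : AffineSubspace K (V × K)} :
    X' ∈ poset (coneArr A) ↔
      (∃ X ∈ poset A, X' = cone X) ∨ (∃ S ⊆ A, X' = liftA (dInt S)) := by
  constructor
  · intro hX'
    obtain ⟨⟨T, hT, rfl⟩, hne⟩ := mem_poset_iff.1 hX'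
    classical
    set S := A.filter (fun H => cone H ∈ T) with hSdef
    have hSA : S ⊆ A := Finset.filter_subset _ _
    have hSb : ∀ H ∈ S, H ≠ ⊥ := fun H hH => (hA H (hSA hH)).1
    have hTdesc : ∀ p : V × K, p ∈ T.inf id ↔
        ((addHyp K V ∈ T → p ∈ addHyp K V) ∧ ∀ H ∈ S, p ∈ cone H) := by
      intro p
      rw [mem_finset_inf]
      constructor
      · intro h
        refine ⟨fun ha => h _ ha, fun H hH => h _ (Finset.mem_filter.1 hH).2⟩
      · rintro ⟨h0, h1⟩ e he
        rcases Finset.mem_insert.1 (hT he) with rfl | hc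
        · exact h0 he
        · obtain ⟨H, hH, rfl⟩ := Finset.mem_image.1 hc
          exact h1 H (Finset.mem_filter.2 ⟨hH, he⟩)
    by_cases haddT : addHyp K V ∈ T
    · right
      refine ⟨S, hSA, ?_⟩
      apply SetLike.ext
      rintro ⟨v, t⟩
      rw [hTdesc, mem_liftA]
      rw [show (∀ H ∈ S, (v, t) ∈ cone H) ↔ _ from mem_cone_all hSb]
      simp only [haddT, forall_true_left, mem_addHyp]
      constructor
      · rintro ⟨rfl, (⟨-, h2⟩ | ⟨h1, -⟩)⟩
        · exact ⟨h2, rfl⟩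
        · exact absurd rfl h1
      · rintro ⟨h1, rfl⟩
        exact ⟨rfl, Or.inl ⟨rfl, h1⟩⟩
    · by_cases hbot : S.inf id = ⊥
      · right
        refine ⟨S, hSA, ?_⟩
        apply SetLike.ext
        rintro ⟨v, t⟩
        rw [hTdesc, mem_liftA]
        rw [show (∀ H ∈ S, (v, t) ∈ cone H) ↔ _ from mem_cone_all hSb]
        constructor
        · rintro ⟨-, (⟨h1, h2⟩ | ⟨h1, h2⟩)⟩
          · exact ⟨h2, h1⟩
          · rw [hbot] at h2
            exact absurd h2 (AffineSubspace.notMem_bot K V _)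
        · rintro ⟨h1, h2⟩
          exact ⟨fun ha => absurd ha haddT, Or.inl ⟨h2, h1⟩⟩
      · left
        refine ⟨S.inf id, mem_poset_iff.2 ⟨⟨S, hSA, rfl⟩, hbot⟩, ?_⟩
        apply SetLike.ext
        rintro ⟨v, t⟩
        rw [hTdesc, mem_cone hbot]
        obtain ⟨p, hp⟩ := (AffineSubspace.nonempty_iff_ne_bot _).2 hbot
        rw [direction_finset_inf hp]
        rw [show (∀ H ∈ S, (v, t) ∈ cone H) ↔ _ from mem_cone_all hSb]
        constructor
        · exact fun h => h.2
        · exact fun h => ⟨fun ha => absurd ha haddT, h⟩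
  · rintro (⟨X, hX, rfl⟩ | ⟨S, hS, rfl⟩)
    · obtain ⟨⟨S, hSA, rfl⟩, hbot⟩ := mem_poset_iff.1 hX
      have hSb : ∀ H ∈ S, H ≠ ⊥ := fun H hH => (hA H (hSA hH)).1
      refine mem_poset_iff.2 ⟨⟨S.image cone, ?_, ?_⟩, cone_ne_bot hbot⟩
      · intro e he
        obtain ⟨H, hH, rfl⟩ := Finset.mem_image.1 he
        exact Finset.mem_insert_of_mem (Finset.mem_image_of_mem cone (hSA hH))
      · exact inf_image_cone_eq_cone hSb hbot
    · have hSb : ∀ H ∈ S, H ≠ ⊥ := fun H hH => (hA H (hS hH)).1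
      refine mem_poset_iff.2 ⟨⟨insert (addHyp K V) (S.image cone), ?_, ?_⟩, liftA_ne_bot _⟩
      · intro e he
        rcases Finset.mem_insert.1 he with rfl | hc
        · exact Finset.mem_insert_self _ _
        · obtain ⟨H, hH, rfl⟩ := Finset.mem_image.1 hc
          exact Finset.mem_insert_of_mem (Finset.mem_image_of_mem cone (hS hH))
      · exact insert_addHyp_inf_eq_liftA hSb

lemma rank_eq_crk_dInt {A : Finset (AffineSubspace K V)} (hA : IsArrangement A) :
    rank A = crk (dInt A) := sup_rk_poset hA

lemma rank_coneArr {A : Finset (AffineSubspace K V)} (hA : IsArrangement A) :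
    rank (coneArr A) = rank A + 1 := by
  apply le_antisymm
  · refine Finset.sup_le fun X' hX' => ?_
    rcases (mem_poset_coneArr_iff hA).1 hX' with ⟨X, hX, rfl⟩ | ⟨S, hS, rfl⟩
    · have hXb := (mem_poset_iff.1 hX).2
      rw [rk_cone hXb]
      have : rk X ≤ rank A := Finset.le_sup hX
      omega
    · rw [rk_liftA]
      have h1 : dInt A ≤ dInt S := Finset.inf_mono hS
      have := crk_anti h1
      rw [rank_eq_crk_dInt hA]
      omega
  · have hmem : liftA (dInt A) ∈ poset (coneArr A) :=
      (mem_poset_coneArr_iff hA).2 (Or.inr ⟨A, le_refl A, rfl⟩)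
    calc rank A + 1 = rk (liftA (dInt A)) := by rw [rk_liftA, rank_eq_crk_dInt hA]
      _ ≤ _ := Finset.le_sup hmem

end Structure

end HypArr


namespace HypArr

section Lmeet

set_option linter.unusedSectionVars false

variable {K V : Type*} [Field K] [AddCommGroup V] [Module K V] [FiniteDimensional K V]

open Module Submodule

lemma hyp_ne_top {A : Finset (AffineSubspace K V)} (hA : IsArrangement A)
    {H : AffineSubspace K V} (hH : H ∈ A) : H ≠ ⊤ := by
  intro h
  have h2 := (hA H hH).2
  rw [h, AffineSubspace.direction_top, finrank_top] at h2
  omega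

lemma le_lmeet_left (A : Finset (AffineSubspace K V)) (X Y : AffineSubspace K V) :
    X ≤ lmeet A X Y := le_sInf fun W hW => hW.2.1

lemma le_lmeet_right (A : Finset (AffineSubspace K V)) (X Y : AffineSubspace K V) :
    Y ≤ lmeet A X Y := le_sInf fun W hW => hW.2.2

lemma lmeet_le' {A : Finset (AffineSubspace K V)} {X Y Z : AffineSubspace K V}
    (hZ : Z ∈ poset A) (h1 : X ≤ Z) (h2 : Y ≤ Z) : lmeet A X Y ≤ Z :=
  sInf_le ⟨hZ, h1, h2⟩

lemma lmeet_eq_inf (A : Finset (AffineSubspace K V)) (X Y : AffineSubspace K V) :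
    lmeet A X Y = ((poset A).filter fun W => X ≤ W ∧ Y ≤ W).inf id := by
  rw [lmeet, Finset.inf_id_eq_sInf]
  congr 1
  ext W
  simp [Finset.mem_filter]

lemma lmeet_ne_bot {A : Finset (AffineSubspace K V)} {X Y : AffineSubspace K V}
    (hX : X ≠ ⊥) : lmeet A X Y ≠ ⊥ := by
  intro h
  have := le_lmeet_left A X Y
  rw [h, le_bot_iff] at this
  exact hX this

lemma lmeet_mem_poset {A : Finset (AffineSubspace K V)} {X Y : AffineSubspace K V}
    (hne : lmeet A X Y ≠ ⊥) : lmeet A X Y ∈ poset A := by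
  rw [lmeet_eq_inf] at hne ⊢
  exact finset_inf_mem_poset (Finset.filter_subset _ _) hne

lemma lmeet_eq_top_iff {A : Finset (AffineSubspace K V)} (hA : IsArrangement A)
    {X Y : AffineSubspace K V} :
    lmeet A X Y = ⊤ ↔ ∀ H ∈ A, ¬(X ≤ H ∧ Y ≤ H) := by
  constructor
  · rintro h H hH ⟨h1, h2⟩
    have hHp : H ∈ poset A := mem_poset_of_mem hH (hA H hH).1
    have hle := lmeet_le' hHp h1 h2
    rw [h, top_le_iff] at hle
    exact hyp_ne_top hA hH hle
  · intro h
    have hset : {W | W ∈ poset A ∧ X ≤ W ∧ Y ≤ W} = {⊤} := by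
      ext W
      simp only [Set.mem_setOf_eq, Set.mem_singleton_iff]
      constructor
      · rintro ⟨hW, h1, h2⟩
        by_contra hne
        obtain ⟨H, hH, hWH⟩ := exists_hyp_of_ne_top hW hne
        exact h H hH ⟨h1.trans hWH, h2.trans hWH⟩
      · rintro rfl
        exact ⟨top_mem_poset A, le_top, le_top⟩
    rw [lmeet, hset, sInf_singleton]

lemma zero_mem_flat {C : Finset (AffineSubspace K V)} (h0 : ∀ H ∈ C, (0 : V) ∈ H)
    {X : AffineSubspace K V} (hX : X ∈ poset C) : (0 : V) ∈ X := by
  obtain ⟨⟨S, hS, rfl⟩, -⟩ := mem_poset_iff.1 hX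
  exact mem_finset_inf.2 fun H hH => h0 H (hS hH)

lemma rk_anti {X Y : AffineSubspace K V} (h : X ≤ Y) : rk Y ≤ rk X :=
  crk_anti (AffineSubspace.direction_le h)

/-- Stanley's criterion, concretely: in a central arrangement, an element `Z` whose joins
with complements are rank-additive is a modular element. -/
lemma modular_of_compl {C : Finset (AffineSubspace K V)} (hC : IsArrangement C)
    (h0 : ∀ H ∈ C, (0 : V) ∈ H) {Z : AffineSubspace K V} (hZ : Z ∈ poset C)
    (hcompl : ∀ Y ∈ poset C, lmeet C Z Y = ⊤ → rk (Z ⊓ Y) = rk Z + rk Y) :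
    ∀ X ∈ poset C, rk Z + rk X = rk (lmeet C Z X) + rk (Z ⊓ X) := by
  intro X hX
  have hZb : Z ≠ ⊥ := (mem_poset_iff.1 hZ).2
  have hXb : X ≠ ⊥ := (mem_poset_iff.1 hX).2
  have h0Z : (0 : V) ∈ Z := zero_mem_flat h0 hZ
  have h0X : (0 : V) ∈ X := zero_mem_flat h0 hX
  set m := lmeet C Z X with hm
  have hmb : m ≠ ⊥ := lmeet_ne_bot hZb
  have hmP : m ∈ poset C := lmeet_mem_poset hmb
  have h0m : (0 : V) ∈ m := zero_mem_flat h0 hmP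
  have hZm : Z ≤ m := le_lmeet_left C Z X
  have hXm : X ≤ m := le_lmeet_right C Z X
  set k := rk X with hk
  set s := rk m with hs
  have hsk : s ≤ k := rk_anti hXm
  have greedy : ∀ j : ℕ, j ≤ k - s →
      ∃ y ∈ poset C, X ≤ y ∧ (0 : V) ∈ y ∧ rk y = j ∧ rk (y ⊓ m) = s + j := by
    intro j
    induction j with
    | zero =>
        intro _
        refine ⟨⊤, top_mem_poset C, le_top, trivial, rk_top', ?_⟩
        rw [top_inf_eq]
        omega
    | succ j ih =>
        intro hj
        obtain ⟨y, hyP, hXy, h0y, hrky, hrkym⟩ := ih (by omega)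
        have hXym : X ≤ y ⊓ m := le_inf hXy hXm
        have hymb : y ⊓ m ≠ ⊥ := fun h => hXb (le_bot_iff.1 (h ▸ hXym))
        have hymP : y ⊓ m ∈ poset C := inf_mem_poset hyP hmP hymb
        have h0ym : (0 : V) ∈ y ⊓ m := zero_mem_flat h0 hymP
        have hne : y ⊓ m ≠ X := by
          intro hEq
          rw [hEq] at hrkym
          omega
        have hlt : X < y ⊓ m := lt_of_le_of_ne hXym (Ne.symm hne)
        obtain ⟨v, hvm, hvX⟩ := SetLike.exists_of_lt hlt
        have hHex : ∃ H ∈ C.filter (fun H => X ≤ H), v ∉ H := by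
          by_contra hcon
          push_neg at hcon
          have hvin : v ∈ (C.filter (fun H => X ≤ H)).inf id := mem_finset_inf.2 hcon
          rw [flat_eq_inf_filter hX] at hvin
          exact hvX hvin
        obtain ⟨H, hHf, hvH⟩ := hHex
        have hHC : H ∈ C := (Finset.mem_filter.1 hHf).1
        have hXH : X ≤ H := (Finset.mem_filter.1 hHf).2
        have hHb : H ≠ ⊥ := (hC H hHC).1
        have hHP : H ∈ poset C := mem_poset_of_mem hHC hHb
        have h0H : (0 : V) ∈ H := h0 H hHC
        have hcrkH : crk H.direction = 1 := by
          have := (hC H hHC).2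
          unfold crk
          omega
        have hXyH : X ≤ y ⊓ H := le_inf hXy hXH
        have hyHb : y ⊓ H ≠ ⊥ := fun h => hXb (le_bot_iff.1 (h ▸ hXyH))
        have hyHP : y ⊓ H ∈ poset C := inf_mem_poset hyP hHP hyHb
        have h0yH : (0 : V) ∈ y ⊓ H := zero_mem_flat h0 hyHP
        -- directions
        have dym : (y ⊓ m).direction = y.direction ⊓ m.direction :=
          AffineSubspace.direction_inf_of_mem h0y h0m
        have dyH : (y ⊓ H).direction = y.direction ⊓ H.direction :=
          AffineSubspace.direction_inf_of_mem h0y h0H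
        -- q := (y ⊓ m) ⊓ H
        have hXq : X ≤ (y ⊓ m) ⊓ H := le_inf hXym hXH
        have hqb : (y ⊓ m) ⊓ H ≠ ⊥ := fun h => hXb (le_bot_iff.1 (h ▸ hXq))
        have hqP : (y ⊓ m) ⊓ H ∈ poset C := inf_mem_poset hymP hHP hqb
        have h0q : (0 : V) ∈ (y ⊓ m) ⊓ H := zero_mem_flat h0 hqP
        have dq : ((y ⊓ m) ⊓ H).direction = (y ⊓ m).direction ⊓ H.direction :=
          AffineSubspace.direction_inf_of_mem h0ym h0H
        -- q is strictly below y ⊓ m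
        have hqlt : ((y ⊓ m) ⊓ H).direction < (y ⊓ m).direction := by
          refine lt_of_le_of_ne (AffineSubspace.direction_le inf_le_left) ?_
          intro hEq
          have : (y ⊓ m) ⊓ H = y ⊓ m :=
            (AffineSubspace.eq_iff_direction_eq_of_mem h0q h0ym).2 hEq
          have hvq : v ∈ (y ⊓ m) ⊓ H := this.symm ▸ hvm
          exact hvH ((AffineSubspace.mem_inf_iff _ _ _).1 hvq).2
        have hrkq_lower : s + j < rk ((y ⊓ m) ⊓ H) := by
          have := crk_lt_of_lt hqlt
          rw [rk_eq_crk, ← hrkym, rk_eq_crk]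
          omega
        have hrkq_upper : rk ((y ⊓ m) ⊓ H) ≤ s + j + 1 := by
          rw [rk_eq_crk, dq]
          have h1 := crk_inf_le_add (y ⊓ m).direction H.direction
          rw [hcrkH] at h1
          rw [rk_eq_crk] at hrkym
          omega
        have hrkq : rk ((y ⊓ m) ⊓ H) = s + j + 1 := by omega
        -- rank of y ⊓ H
        have hcomm : (y ⊓ m) ⊓ H = (y ⊓ H) ⊓ m := by
          rw [inf_assoc, inf_assoc, inf_comm m H]
        have hrkyH_upper : rk (y ⊓ H) ≤ j + 1 := by
          rw [rk_eq_crk, dyH]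
          have h1 := crk_inf_le_add y.direction H.direction
          rw [hcrkH] at h1
          rw [rk_eq_crk] at hrky
          omega
        have dqm : ((y ⊓ H) ⊓ m).direction = (y ⊓ H).direction ⊓ m.direction :=
          AffineSubspace.direction_inf_of_mem h0yH h0m
        have hrkyH_lower : j + 1 ≤ rk (y ⊓ H) := by
          have h1 := crk_inf_le_add (y ⊓ H).direction m.direction
          have h2 : rk ((y ⊓ H) ⊓ m) = s + j + 1 := by rw [← hcomm]; exact hrkq
          rw [rk_eq_crk, dqm] at h2
          rw [rk_eq_crk]
          rw [rk_eq_crk] at hs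
          omega
        refine ⟨y ⊓ H, hyHP, hXyH, h0yH, by omega, ?_⟩
        rw [← hcomm]
        omega
  obtain ⟨y, hyP, hXy, h0y, hrky, hrkym⟩ := greedy (k - s) le_rfl
  have hrkym' : rk (y ⊓ m) = k := by omega
  -- X = y ⊓ m
  have hXym : X ≤ y ⊓ m := le_inf hXy hXm
  have h0ym : (0 : V) ∈ y ⊓ m := ⟨h0y, h0m⟩
  have hdXym : X.direction = (y ⊓ m).direction := by
    have hle := AffineSubspace.direction_le hXym
    refine Submodule.eq_of_le_of_finrank_le hle ?_
    have e1 := crk_add_finrank X.direction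
    have e2 := crk_add_finrank (y ⊓ m).direction
    rw [show crk X.direction = k from rfl] at e1
    rw [show crk (y ⊓ m).direction = rk (y ⊓ m) from rfl, hrkym'] at e2
    omega
  have hXeq : X = y ⊓ m := (AffineSubspace.eq_iff_direction_eq_of_mem h0X h0ym).2 hdXym
  -- lmeet C Z y = ⊤
  have hdym : y.direction ⊓ m.direction = X.direction := by
    rw [hdXym, AffineSubspace.direction_inf_of_mem h0y h0m]
  have hsup : y.direction ⊔ m.direction = ⊤ := by
    rw [← crk_eq_zero_iff]
    have h1 := crk_inf_add_crk_sup y.direction m.direction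
    rw [hdym] at h1
    rw [rk_eq_crk] at hrky hs
    have : crk X.direction = k := rfl
    omega
  have hlmZy : lmeet C Z y = ⊤ := by
    rw [lmeet_eq_top_iff hC]
    rintro H hH ⟨hZH, hyH⟩
    have hHP : H ∈ poset C := mem_poset_of_mem hH (hC H hH).1
    have hmH : m ≤ H := lmeet_le' hHP hZH (hXy.trans hyH)
    have hdH : H.direction = ⊤ := by
      rw [← top_le_iff, ← hsup]
      exact sup_le (AffineSubspace.direction_le hyH) (AffineSubspace.direction_le hmH)
    have := (hC H hH).2
    rw [hdH, finrank_top] at this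
    omega
  have hZy := hcompl y hyP hlmZy
  -- Z ⊓ X = Z ⊓ y
  have hZX : Z ⊓ X = Z ⊓ y := by
    rw [hXeq, inf_comm y m, ← inf_assoc, inf_eq_left.2 hZm, inf_comm Z y, inf_comm y Z]
  have hfin : rk (Z ⊓ X) = rk Z + (k - s) := by rw [hZX, hZy, hrky]
  omega

end Lmeet

end HypArr


namespace HypArr

section ModIdeal

set_option linter.unusedSectionVars false

variable {K V : Type*} [Field K] [AddCommGroup V] [Module K V] [FiniteDimensional K V]

open Module Submodule

lemma mem_meetCompl_iff {A I : Finset (AffineSubspace K V)} {Y : AffineSubspace K V} :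
    Y ∈ meetCompl A I ↔ Y ∈ poset A ∧ ∀ X ∈ I, lmeet A X Y = ⊤ := by
  rw [meetCompl, Finset.mem_filter]

/-- upward closure of `poset B` in `poset A` for direction-closed `B` -/
lemma poset_upward_closed {A B : Finset (AffineSubspace K V)} (hBA : B ⊆ A)
    (hdc : ∀ H ∈ A, dInt B ≤ H.direction → H ∈ B)
    {X Y : AffineSubspace K V} (hX : X ∈ poset B) (hY : Y ∈ poset A) (hXY : X ≤ Y) :
    Y ∈ poset B := by
  have hYb : Y ≠ ⊥ := (mem_poset_iff.1 hY).2
  refine mem_poset_iff.2 ⟨⟨A.filter (fun H => Y ≤ H), ?_, flat_eq_inf_filter hY⟩, hYb⟩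
  intro H hH
  obtain ⟨hHA, hYH⟩ := Finset.mem_filter.1 hH
  refine hdc H hHA ?_
  calc dInt B ≤ X.direction := dInt_le_direction_of_mem_poset hX
    _ ≤ H.direction := AffineSubspace.direction_le (hXY.trans hYH)

lemma meetCompl_of_scl {A B : Finset (AffineSubspace K V)} (hA : IsArrangement A)
    (hBA : B ⊆ A) {Y : AffineSubspace K V} (hY : Y ∈ poset A)
    (hscl : ∀ H ∈ A, dInt B ≤ H.direction → ¬ Y ≤ H) :
    Y ∈ meetCompl A (poset B) := by
  refine mem_meetCompl_iff.2 ⟨hY, fun X hX => ?_⟩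
  rw [lmeet_eq_top_iff hA]
  rintro H hH ⟨hXH, hYH⟩
  refine hscl H hH ?_ hYH
  calc dInt B ≤ X.direction := dInt_le_direction_of_mem_poset hX
    _ ≤ H.direction := AffineSubspace.direction_le hXH

lemma scl_of_meetCompl {A B : Finset (AffineSubspace K V)} (hA : IsArrangement A)
    (hBA : B ⊆ A) (hdc : ∀ H ∈ A, dInt B ≤ H.direction → H ∈ B)
    {Y : AffineSubspace K V} (hY : Y ∈ meetCompl A (poset B)) :
    ∀ H ∈ A, dInt B ≤ H.direction → ¬ Y ≤ H := by
  intro H hH hdH hYH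
  have hHB : H ∈ B := hdc H hH hdH
  have hHb : H ≠ ⊥ := (hA H hH).1
  have hHpB : H ∈ poset B := mem_poset_of_mem hHB hHb
  have := (mem_meetCompl_iff.1 hY).2 H hHpB
  rw [lmeet_eq_top_iff hA] at this
  exact this H hH ⟨le_refl H, hYH⟩

/-- central fact: modular-consequence transversality gives joins with complements -/
lemma joins_of_MC {A B : Finset (AffineSubspace K V)} (hA : IsArrangement A)
    (hBA : B ⊆ A) (hdc : ∀ H ∈ A, dInt B ≤ H.direction → H ∈ B)
    (hMC : ∀ Y ∈ poset A, (∀ H ∈ A, dInt B ≤ H.direction → ¬ Y ≤ H) →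
      dInt B ⊔ Y.direction = ⊤)
    {X Y : AffineSubspace K V} (hX : X ∈ poset B) (hY : Y ∈ meetCompl A (poset B)) :
    X ⊓ Y ≠ ⊥ ∧ rk (X ⊓ Y) = rk X + rk Y := by
  have hYA : Y ∈ poset A := (mem_meetCompl_iff.1 hY).1
  have hscl := scl_of_meetCompl hA hBA hdc hY
  have hsup : dInt B ⊔ Y.direction = ⊤ := hMC Y hYA hscl
  have hsup' : X.direction ⊔ Y.direction = ⊤ := by
    rw [← top_le_iff, ← hsup]
    exact sup_le_sup_right (dInt_le_direction_of_mem_poset hX) _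
  have hXb : X ≠ ⊥ := (mem_poset_iff.1 (poset_mono hBA hX)).2
  have hYb : Y ≠ ⊥ := (mem_poset_iff.1 hYA).2
  have hne : X ⊓ Y ≠ ⊥ := inf_ne_bot_of_direction_sup_eq_top hXb hYb hsup'
  refine ⟨hne, ?_⟩
  obtain ⟨p, hp⟩ := (AffineSubspace.nonempty_iff_ne_bot _).2 hne
  have hp' := (AffineSubspace.mem_inf_iff _ _ _).1 hp
  rw [rk_eq_crk, rk_eq_crk, rk_eq_crk,
    AffineSubspace.direction_inf_of_mem hp'.1 hp'.2]
  exact crk_inf_eq_add_iff.2 hsup'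

lemma fin2_inf {α : Type*} [SemilatticeInf α] [OrderTop α] (f : Fin 2 → α) :
    Finset.univ.inf f = f 0 ⊓ f 1 := by
  rw [show (Finset.univ : Finset (Fin 2)) = {0, 1} by decide]
  rw [Finset.inf_insert, Finset.inf_singleton]

/-- direction-closed subarrangements satisfying the transversality consequence
are modular subarrangements. -/
lemma isModularSub_of_MC {A B : Finset (AffineSubspace K V)} (hA : IsArrangement A)
    (hBA : B ⊆ A) (hdc : ∀ H ∈ A, dInt B ≤ H.direction → H ∈ B)
    (hMC : ∀ Y ∈ poset A, (∀ H ∈ A, dInt B ≤ H.direction → ¬ Y ≤ H) →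
      dInt B ⊔ Y.direction = ⊤) :
    IsModularSub A B := by
  refine ⟨hBA, ?_, ?_, ?_, ?_⟩
  · -- ideals
    intro i
    match i with
    | 0 =>
        refine ⟨poset_mono hBA, ?_⟩
        intro X hX Y hY hXY
        exact poset_upward_closed hBA hdc hX hY hXY
    | 1 =>
        refine ⟨Finset.filter_subset _ _, ?_⟩
        intro X hX Y hY hXY
        refine mem_meetCompl_iff.2 ⟨hY, fun X' hX' => ?_⟩
        have hX'X := (mem_meetCompl_iff.1 hX).2 X' hX'
        rw [lmeet_eq_top_iff hA] at hX'X ⊢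
        rintro H hH ⟨h1, h2⟩
        exact hX'X H hH ⟨h1, hXY.trans h2⟩
  · -- (I1)
    intro X hX hXtop
    by_cases hex : ∃ H ∈ B, X ≤ H
    · obtain ⟨H0, hH0B, hXH0⟩ := hex
      set F := B.filter (fun H => X ≤ H) with hF
      have hFB : F ⊆ B := Finset.filter_subset _ _
      have hXZ : X ≤ F.inf id := Finset.le_inf fun H hH => (Finset.mem_filter.1 hH).2
      have hZb : F.inf id ≠ ⊥ := by
        intro h
        rw [h, le_bot_iff] at hXZ
        exact (mem_poset_iff.1 hX).2 hXZ
      have hZpB : F.inf id ∈ poset B := mem_poset_iff.2 ⟨⟨F, hFB, rfl⟩, hZb⟩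
      have hZpA : F.inf id ∈ poset A := poset_mono hBA hZpB
      have hZtop : F.inf id ≠ ⊤ := by
        intro h
        have hle : F.inf id ≤ H0 := Finset.inf_le (Finset.mem_filter.2 ⟨hH0B, hXH0⟩)
        rw [h, top_le_iff] at hle
        exact hyp_ne_top hA (hBA hH0B) hle
      refine ⟨0, F.inf id, hZpA, hZtop, ?_⟩
      apply Finset.ext
      intro Y
      simp only [Matrix.cons_val_zero, Finset.mem_inter, principal, Finset.mem_filter]
      constructor
      · rintro ⟨hYB, hYA, hXY⟩
        refine ⟨hYA, ?_⟩
        obtain ⟨⟨S, hSB, rfl⟩, hYb⟩ := mem_poset_iff.1 hYB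
        refine Finset.inf_mono fun H hH => Finset.mem_filter.2 ⟨hSB hH, ?_⟩
        exact hXY.trans (Finset.inf_le hH)
      · rintro ⟨hYA, hZY⟩
        exact ⟨poset_upward_closed hBA hdc hZpB hYA hZY, hYA, hXZ.trans hZY⟩
    · push_neg at hex
      refine ⟨1, X, hX, hXtop, ?_⟩
      apply Finset.ext
      intro Y
      simp only [Matrix.cons_val_one, Matrix.head_cons, Finset.mem_inter, principal,
        Finset.mem_filter]
      constructor
      · rintro ⟨-, hYA, hXY⟩
        exact ⟨hYA, hXY⟩
      · rintro ⟨hYA, hXY⟩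
        refine ⟨?_, hYA, hXY⟩
        refine meetCompl_of_scl hA hBA hYA ?_
        intro H hH hdH hYH
        exact hex H (hdc H hH hdH) (hXY.trans hYH)
  · -- (I2)
    intro f hf
    have h0 : f 0 ∈ poset B := by have := hf 0; simpa using this
    have h1 : f 1 ∈ meetCompl A (poset B) := by have := hf 1; simpa using this
    rw [fin2_inf]
    exact (joins_of_MC hA hBA hdc hMC h0 h1).1
  · -- (I3)
    intro f hf
    have h0 : f 0 ∈ poset B := by have := hf 0; simpa using this
    have h1 : f 1 ∈ meetCompl A (poset B) := by have := hf 1; simpa using this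
    rw [fin2_inf, Fin.sum_univ_two]
    exact (joins_of_MC hA hBA hdc hMC h0 h1).2

/-- conversely, a modular subarrangement satisfies the transversality consequence -/
lemma MC_of_isModularSub {A B : Finset (AffineSubspace K V)} (hA : IsArrangement A)
    (hB : IsModularSub A B) :
    ∀ Y ∈ poset A, (∀ H ∈ A, dInt B ≤ H.direction → ¬ Y ≤ H) →
      dInt B ⊔ Y.direction = ⊤ := by
  obtain ⟨hBA, hIdeal, hI1, hI2, hI3⟩ := hB
  intro Y hY hscl
  have hYmc : Y ∈ meetCompl A (poset B) := meetCompl_of_scl hA hBA hY hscl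
  obtain ⟨X0, hX0, hdX0⟩ := exists_dInt_flat (fun H hH => hA H (hBA hH))
  set f : Fin 2 → AffineSubspace K V := ![X0, Y] with hfdef
  have hf : ∀ i, f i ∈ ![poset B, meetCompl A (poset B)] i := by
    intro i
    match i with
    | 0 => simpa [hfdef] using hX0
    | 1 => simpa [hfdef] using hYmc
  have hne := hI2 f hf
  have hrk := hI3 f hf
  rw [fin2_inf] at hne hrk
  rw [Fin.sum_univ_two] at hrk
  have hf0 : f 0 = X0 := rfl
  have hf1 : f 1 = Y := rfl
  rw [hf0, hf1] at hne hrk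
  obtain ⟨p, hp⟩ := (AffineSubspace.nonempty_iff_ne_bot _).2 hne
  have hp' := (AffineSubspace.mem_inf_iff _ _ _).1 hp
  rw [rk_eq_crk, rk_eq_crk, rk_eq_crk,
    AffineSubspace.direction_inf_of_mem hp'.1 hp'.2, hdX0] at hrk
  have := crk_inf_eq_add_iff.1 hrk
  rw [← hdX0]
  rw [← hdX0] at this
  exact this

lemma zero_mem_coneArr {A : Finset (AffineSubspace K V)} (hA : IsArrangement A) :
    ∀ H' ∈ coneArr A, ((0 : V), (0 : K)) ∈ H' := by
  intro H' hH'
  rcases Finset.mem_insert.1 hH' with rfl | hc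
  · exact mem_addHyp.2 rfl
  · obtain ⟨H, hH, rfl⟩ := Finset.mem_image.1 hc
    rw [cone_eq_coneS, Submodule.mem_toAffineSubspace]
    exact zero_mem _

/-- the transversality consequence implies that `liftA (dInt B)` is a modular element
of the cone -/
lemma isModularElement_of_MC {A B : Finset (AffineSubspace K V)} (hA : IsArrangement A)
    (hBA : B ⊆ A)
    (hMC : ∀ Y ∈ poset A, (∀ H ∈ A, dInt B ≤ H.direction → ¬ Y ≤ H) →
      dInt B ⊔ Y.direction = ⊤) :
    IsModularElement (coneArr A) (liftA (dInt B)) := by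
  have hCA := isArrangement_coneArr hA
  have h0 : ∀ H' ∈ coneArr A, (0 : V × K) ∈ H' := zero_mem_coneArr hA
  have hZmem : liftA (dInt B) ∈ poset (coneArr A) :=
    (mem_poset_coneArr_iff hA).2 (Or.inr ⟨B, hBA, rfl⟩)
  refine ⟨hZmem, ?_⟩
  intro X' hX'
  refine modular_of_compl hCA h0 hZmem ?_ X' hX'
  intro Y' hY' hlm
  rcases (mem_poset_coneArr_iff hA).1 hY' with ⟨Y, hY, rfl⟩ | ⟨S, hS, rfl⟩
  · -- Y' = cone Y
    have hYb : Y ≠ ⊥ := (mem_poset_iff.1 hY).2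
    rw [lmeet_eq_top_iff hCA] at hlm
    have hscl : ∀ H ∈ A, dInt B ≤ H.direction → ¬ Y ≤ H := by
      intro H hH hdH hYH
      have hHb : H ≠ ⊥ := (hA H hH).1
      refine hlm (cone H) (Finset.mem_insert_of_mem (Finset.mem_image_of_mem cone hH))
        ⟨(liftA_le_cone hHb).2 hdH, (cone_le_cone hYb hHb).2 hYH⟩
    have hsup := hMC Y hY hscl
    rw [liftA_inf_cone hYb, rk_liftA, rk_liftA, rk_cone hYb, rk_eq_crk,
      crk_inf_eq_add_iff.2 hsup]
    omega
  · -- Y' = liftA (dInt S) : impossible since both are below addHyp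
    exfalso
    rw [lmeet_eq_top_iff hCA] at hlm
    refine hlm (addHyp K V) (Finset.mem_insert_self _ _) ?_
    rw [addHyp_eq_liftA_top]
    exact ⟨liftA_le_liftA.2 le_top, liftA_le_liftA.2 le_top⟩

/-- a modular element `liftA W` of the cone yields the transversality consequence -/
lemma MC_of_isModularElement {A : Finset (AffineSubspace K V)} (hA : IsArrangement A)
    {W : Submodule K V} (hmod : IsModularElement (coneArr A) (liftA W)) :
    ∀ Y ∈ poset A, (∀ H ∈ A, W ≤ H.direction → ¬ Y ≤ H) →
      W ⊔ Y.direction = ⊤ := by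
  have hCA := isArrangement_coneArr hA
  intro Y hY hscl
  have hYb : Y ≠ ⊥ := (mem_poset_iff.1 hY).2
  have hconeY : cone Y ∈ poset (coneArr A) :=
    (mem_poset_coneArr_iff hA).2 (Or.inl ⟨Y, hY, rfl⟩)
  have heq := hmod.2 (cone Y) hconeY
  have hlm : lmeet (coneArr A) (liftA W) (cone Y) = ⊤ := by
    rw [lmeet_eq_top_iff hCA]
    rintro H' hH' ⟨h1, h2⟩
    rcases Finset.mem_insert.1 hH' with rfl | hc
    · rw [addHyp_eq_liftA_top] at h2
      exact cone_not_le_liftA hYb h2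
    · obtain ⟨H, hH, rfl⟩ := Finset.mem_image.1 hc
      have hHb : H ≠ ⊥ := (hA H hH).1
      exact hscl H hH ((liftA_le_cone hHb).1 h1) ((cone_le_cone hYb hHb).1 h2)
  rw [hlm, rk_top', liftA_inf_cone hYb, rk_liftA, rk_liftA, rk_cone hYb, rk_eq_crk] at heq
  refine crk_inf_eq_add_iff.1 ?_
  omega

end ModIdeal

end HypArr


namespace HypArr

section FinalHelpers

set_option linter.unusedSectionVars false

variable {K V : Type*} [Field K] [AddCommGroup V] [Module K V] [FiniteDimensional K V]

open Module Submodule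

lemma lmeet_top_left (A : Finset (AffineSubspace K V)) (X : AffineSubspace K V) :
    lmeet A ⊤ X = ⊤ := by
  have hset : {W | W ∈ poset A ∧ ⊤ ≤ W ∧ X ≤ W} = {⊤} := by
    ext W
    simp only [Set.mem_setOf_eq, Set.mem_singleton_iff]
    constructor
    · rintro ⟨-, h1, -⟩
      exact top_le_iff.1 h1
    · rintro rfl
      exact ⟨top_mem_poset A, le_refl ⊤, le_top⟩
  rw [lmeet, hset, sInf_singleton]

lemma isModularElement_top (A : Finset (AffineSubspace K V)) :
    IsModularElement A (⊤ : AffineSubspace K V) := by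
  refine ⟨top_mem_poset A, fun X hX => ?_⟩
  rw [lmeet_top_left, top_inf_eq, rk_top']

lemma rk_addHyp : rk (addHyp K V) = 1 := by
  rw [addHyp_eq_liftA_top, rk_liftA, crk_top]

lemma dInt_empty : dInt (∅ : Finset (AffineSubspace K V)) = ⊤ := Finset.inf_empty

end FinalHelpers

end HypArr

namespace HypArr

/-- **Theorem.** The cone `cA` is supersolvable with a maximal modular chain passing
through the additional hyperplane `K` if and only if `A` admits a maximal saturated
chain of modular subarrangements `∅ = A_0 ⊊ A_1 ⊊ ⋯ ⊊ A_r = A` with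
`r(L(A_i)) = i`, where `r = r(A)`.  (A chain in `L(cA)` is written in the
reverse-inclusion order: `i ≤ j → c j ⊆ c i`, with `r(c i) = i`.) -/
theorem cone_supersolvable_iff_chain_modularSubs
    {K V : Type*} [Field K] [AddCommGroup V] [Module K V] [FiniteDimensional K V]
    (A : Finset (AffineSubspace K V)) (hA : IsArrangement A) :
    (∃ c : Fin (rank (coneArr A) + 1) → AffineSubspace K (V × K),
        (∀ i, c i ∈ poset (coneArr A)) ∧
        (∀ i, IsModularElement (coneArr A) (c i)) ∧
        (∀ i, rk (c i) = (i : ℕ)) ∧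
        (∀ i j, i ≤ j → c j ≤ c i) ∧
        (∃ i, c i = addHyp K V)) ↔
    (∃ B : Fin (rank A + 1) → Finset (AffineSubspace K V),
        B 0 = ∅ ∧ B (Fin.last (rank A)) = A ∧
        (∀ i j, i < j → B i ⊂ B j) ∧
        (∀ i, IsModularSub A (B i)) ∧
        (∀ i, (poset (B i)).sup rk = (i : ℕ))) := by
  have hrc := rank_coneArr hA
  constructor
  · -- cone supersolvable through K → chain of modular subarrangements
    rintro ⟨c, hc1, hc2, hc3, hc4, i0, hci0⟩
    have hi0 : (i0 : ℕ) = 1 := by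
      have h := hc3 i0
      rw [hci0, rk_addHyp] at h
      omega
    have hidx : ∀ i : Fin (rank A + 1), (i : ℕ) + 1 < rank (coneArr A) + 1 := by
      intro i
      have := i.isLt
      omega
    have hstruct : ∀ i : Fin (rank A + 1), ∃ S, S ⊆ A ∧
        c ⟨(i : ℕ) + 1, hidx i⟩ = liftA (dInt S) := by
      intro i
      rcases (mem_poset_coneArr_iff hA).1 (hc1 ⟨(i : ℕ) + 1, hidx i⟩) with
        ⟨X, hX, hEq⟩ | ⟨S, hS, hEq⟩
      · exfalso
        have hle : c ⟨(i : ℕ) + 1, hidx i⟩ ≤ c i0 := by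
          apply hc4
          rw [Fin.le_def]
          show (i0 : ℕ) ≤ (i : ℕ) + 1
          omega
        rw [hEq, hci0, addHyp_eq_liftA_top] at hle
        exact cone_not_le_liftA (mem_poset_iff.1 hX).2 hle
      · exact ⟨S, hS, hEq⟩
    choose S hSA hcS using hstruct
    set U : Fin (rank A + 1) → Submodule K V := fun i => dInt (S i) with hU
    set B : Fin (rank A + 1) → Finset (AffineSubspace K V) :=
      fun i => A.filter (fun H => U i ≤ H.direction) with hB
    have hBA : ∀ i, B i ⊆ A := fun i => Finset.filter_subset _ _
    have hArrB : ∀ i, IsArrangement (B i) := fun i H hH => hA H (hBA i hH)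
    have hdIntB : ∀ i, dInt (B i) = U i := by
      intro i
      apply le_antisymm
      · exact Finset.inf_mono fun H hH =>
          Finset.mem_filter.2 ⟨hSA i hH, Finset.inf_le hH⟩
      · exact Finset.le_inf fun H hH => (Finset.mem_filter.1 hH).2
    have hcrkU : ∀ i, crk (U i) = (i : ℕ) := by
      intro i
      have h3 := hc3 ⟨(i : ℕ) + 1, hidx i⟩
      rw [hcS i, rk_liftA] at h3
      have h3' : crk (U i) + 1 = (i : ℕ) + 1 := h3
      omega
    have hUmono : ∀ i j : Fin (rank A + 1), i ≤ j → U j ≤ U i := by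
      intro i j hij
      have hle : c ⟨(j : ℕ) + 1, hidx j⟩ ≤ c ⟨(i : ℕ) + 1, hidx i⟩ := by
        apply hc4
        rw [Fin.le_def]
        show (i : ℕ) + 1 ≤ (j : ℕ) + 1
        have := Fin.le_def.1 hij
        omega
      rw [hcS i, hcS j] at hle
      exact liftA_le_liftA.1 hle
    have hBmono : ∀ i j, i ≤ j → B i ⊆ B j := by
      intro i j hij H hH
      obtain ⟨hHA, hUi⟩ := Finset.mem_filter.1 hH
      exact Finset.mem_filter.2 ⟨hHA, (hUmono i j hij).trans hUi⟩
    refine ⟨B, ?_, ?_, ?_, ?_, ?_⟩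
    · -- B 0 = ∅
      have h0 : crk (U 0) = 0 := by simpa using hcrkU 0
      have hU0 : U 0 = ⊤ := crk_eq_zero_iff.1 h0
      refine Finset.filter_eq_empty_iff.2 ?_
      intro H hH hle
      rw [hU0, top_le_iff] at hle
      have h2 := (hA H hH).2
      rw [hle, finrank_top] at h2
      omega
    · -- B last = A
      have h1 : dInt A ≤ U (Fin.last (rank A)) := Finset.inf_mono (hSA _)
      have h2 : crk (U (Fin.last (rank A))) = rank A := by
        rw [hcrkU, Fin.val_last]
      have h3 : crk (dInt A) = rank A := (rank_eq_crk_dInt hA).symm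
      have hfr : Module.finrank K (U (Fin.last (rank A))) ≤ Module.finrank K (dInt A) := by
        have b1 := crk_add_finrank (U (Fin.last (rank A)))
        have b2 := crk_add_finrank (dInt A)
        omega
      have hEq : dInt A = U (Fin.last (rank A)) :=
        Submodule.eq_of_le_of_finrank_le h1 hfr
      refine Finset.filter_true_of_mem ?_
      intro H hH
      rw [← hEq]
      exact Finset.inf_le hH
    · -- strict monotone
      intro i j hij
      refine Finset.ssubset_iff_subset_ne.2 ⟨hBmono i j (le_of_lt hij), ?_⟩
      intro hEq
      have hcrkEq : crk (U i) = crk (U j) := by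
        rw [← hdIntB i, ← hdIntB j, hEq]
      rw [hcrkU i, hcrkU j] at hcrkEq
      have := Fin.lt_def.1 hij
      omega
    · -- modular subarrangements
      intro i
      have hmod : IsModularElement (coneArr A) (liftA (U i)) := by
        have h2 := hc2 ⟨(i : ℕ) + 1, hidx i⟩
        rw [hcS i] at h2
        exact h2
      have hMC := MC_of_isModularElement hA hmod
      refine isModularSub_of_MC hA (hBA i) ?_ ?_
      · intro H hH hle
        rw [hdIntB i] at hle
        exact Finset.mem_filter.2 ⟨hH, hle⟩
      · intro Y hY hscl
        rw [hdIntB i] at hscl ⊢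
        exact hMC Y hY hscl
    · -- ranks
      intro i
      rw [sup_rk_poset (hArrB i), hdIntB i, hcrkU i]
  · -- chain of modular subarrangements → cone supersolvable through K
    rintro ⟨B, hB0, hBlast, hBstrict, hBmod, hBrk⟩
    have hBA : ∀ i, B i ⊆ A := fun i => (hBmod i).1
    have hArrB : ∀ i, IsArrangement (B i) := fun i H hH => hA H (hBA i hH)
    have hBmono : ∀ i j : Fin (rank A + 1), i ≤ j → B i ⊆ B j := by
      intro i j hij
      rcases lt_or_eq_of_le hij with h | h
      · exact subset_of_ssubset (hBstrict i j h)
      · rw [h]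
    have hcrkB : ∀ i, crk (dInt (B i)) = (i : ℕ) := by
      intro i
      rw [← sup_rk_poset (hArrB i)]
      exact hBrk i
    refine ⟨fun i => if h : (i : ℕ) = 0 then ⊤
      else liftA (dInt (B ⟨(i : ℕ) - 1, by have := i.isLt; omega⟩)), ?_, ?_, ?_, ?_, ?_⟩
    · intro i
      by_cases hi : (i : ℕ) = 0
      · simp only [dif_pos hi]
        exact top_mem_poset _
      · simp only [dif_neg hi]
        exact (mem_poset_coneArr_iff hA).2 (Or.inr ⟨B _, hBA _, rfl⟩)
    · intro i
      by_cases hi : (i : ℕ) = 0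
      · simp only [dif_pos hi]
        exact isModularElement_top _
      · simp only [dif_neg hi]
        exact isModularElement_of_MC hA (hBA _) (MC_of_isModularSub hA (hBmod _))
    · intro i
      by_cases hi : (i : ℕ) = 0
      · simp only [dif_pos hi]
        rw [rk_top', hi]
      · simp only [dif_neg hi]
        rw [rk_liftA, hcrkB]
        show (i : ℕ) - 1 + 1 = (i : ℕ)
        omega
    · intro i j hij
      by_cases hi : (i : ℕ) = 0
      · simp only [dif_pos hi]
        exact le_top
      · have hj : (j : ℕ) ≠ 0 := by
          have := Fin.le_def.1 hij
          omega
        simp only [dif_neg hi, dif_neg hj]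
        refine liftA_le_liftA.2 ?_
        refine Finset.inf_mono ?_
        refine hBmono _ _ ?_
        rw [Fin.le_def]
        show (i : ℕ) - 1 ≤ (j : ℕ) - 1
        have := Fin.le_def.1 hij
        omega
    · refine ⟨⟨1, by omega⟩, ?_⟩
      have hne : ¬ ((⟨1, by omega⟩ : Fin (rank (coneArr A) + 1)) : ℕ) = 0 := one_ne_zero
      simp only [dif_neg hne]
      have hzero : (⟨((⟨1, by omega⟩ : Fin (rank (coneArr A) + 1)) : ℕ) - 1,
          by omega⟩ : Fin (rank A + 1)) = 0 := by
        apply Fin.ext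
        simp
      rw [hzero, hB0, dInt_empty, ← addHyp_eq_liftA_top]

end HypArr
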